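/- arXiv:1805.01927 — 2 statements merged into one kernel-verified Lean document; each statement's English description precedes it below -/
import Mathlib

section
/- Let $m \geq 1$, let $p$ be an integer, and let $A$ be a nonzero complex number. Let $C$ be the $m \times m$ complex matrix with entries $C_{jk} = (-1)^{k-j} A^{p(k^2-1) + p(j - j^2)}$ if $j \leq k$ and $C_{jk} = 0$ otherwise (indices $1 \leq j, k \leq m$; $A^n$ for $n \in \mathbb{Z}$ denotes integer powers of the nonzero number $A$). Then $C$ is invertible, and its inverse is the matrix with entries $(C^{-1})_{jk} = A^{p(1 - j^2) + p(k^2 - k)}$ if $k = j$ or $k = j+1$, and $(C^{-1})_{jk} = 0$ otherwise. -/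
theorem cabling_matrix_inverse
    (m : ℕ) (hm : 1 ≤ m) (p : ℤ) (A : ℂ) (hA : A ≠ 0)
    (C C' : Matrix (Fin m) (Fin m) ℂ)
    (hC : ∀ j k : Fin m, C j k =
      if j ≤ k then
        (-1 : ℂ) ^ ((k : ℕ) - (j : ℕ)) *
          A ^ (p * (((k : ℤ) + 1) ^ 2 - 1) + p * (((j : ℤ) + 1) - ((j : ℤ) + 1) ^ 2))
      else 0)
    (hC' : ∀ j k : Fin m, C' j k =
      if (k : ℕ) = (j : ℕ) ∨ (k : ℕ) = (j : ℕ) + 1 then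
        A ^ (p * (1 - ((j : ℤ) + 1) ^ 2) + p * (((k : ℤ) + 1) ^ 2 - ((k : ℤ) + 1)))
      else 0) :
    IsUnit C ∧ C⁻¹ = C' := by
  have hmul : C * C' = 1 := by
    ext j k
    rw [Matrix.mul_apply, Matrix.one_apply]
    set X : Fin m → ℂ := fun l =>
      A ^ (p * (1 - ((l : ℤ) + 1) ^ 2) + p * (((k : ℤ) + 1) ^ 2 - ((k : ℤ) + 1))) with hX
    have hsplit : ∀ l : Fin m, C' l k =
        (if l = k then X l else 0) + (if (k : ℕ) = (l : ℕ) + 1 then X l else 0) := by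
      intro l
      rw [hC']
      by_cases h1 : l = k
      · have : (k : ℕ) = (l : ℕ) := by rw [h1]
        have h2 : ¬ (k : ℕ) = (l : ℕ) + 1 := by omega
        simp [h1, this, h2, hX]
      · have h3 : ¬ (k : ℕ) = (l : ℕ) := fun h => h1 (Fin.ext h.symm)
        by_cases h2 : (k : ℕ) = (l : ℕ) + 1 <;> simp [h1, h2, h3, hX]
    have hsum : ∑ l, C j l * C' l k =
        (∑ l, if l = k then C j l * X l else 0) +
        ∑ l : Fin m, if (k : ℕ) = (l : ℕ) + 1 then C j l * X l else 0 := by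
      rw [← Finset.sum_add_distrib]
      refine Finset.sum_congr rfl fun l _ => ?_
      rw [hsplit l, mul_add, mul_ite, mul_zero, mul_ite, mul_zero]
    rw [hsum, Finset.sum_ite_eq' Finset.univ k (fun l => C j l * X l)]
    simp only [Finset.mem_univ, if_true]
    by_cases hk0 : (k : ℕ) = 0
    · have hzero : ∀ l : Fin m, (if (k : ℕ) = (l : ℕ) + 1 then C j l * X l else 0) = 0 := by
        intro l; rw [if_neg]; omega
      rw [Finset.sum_congr rfl (fun l _ => hzero l), Finset.sum_const_zero, add_zero]
      by_cases hjk : j = k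
      · rw [if_pos hjk, hjk, hC, if_pos le_rfl, hX]
        rw [Nat.sub_self, pow_zero, one_mul, ← zpow_add₀ hA]
        rw [show (p * (((k : ℤ) + 1) ^ 2 - 1) + p * (((k : ℤ) + 1) - ((k : ℤ) + 1) ^ 2)) +
          (p * (1 - ((k : ℤ) + 1) ^ 2) + p * (((k : ℤ) + 1) ^ 2 - ((k : ℤ) + 1))) = 0 by ring]
        exact zpow_zero A
      · rw [if_neg hjk, hC, if_neg, zero_mul]
        intro h
        exact hjk (Fin.ext (by omega))
    · set k' : Fin m := ⟨(k : ℕ) - 1, by omega⟩ with hk'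
      have hcond : ∀ l : Fin m, ((k : ℕ) = (l : ℕ) + 1) ↔ l = k' := by
        intro l
        constructor
        · intro h; exact Fin.ext (by simp [hk']; omega)
        · intro h; rw [h]; simp [hk']; omega
      have hs2 : ∑ l : Fin m, (if (k : ℕ) = (l : ℕ) + 1 then C j l * X l else 0) = C j k' * X k' := by
        rw [Finset.sum_congr rfl (fun l _ => by rw [if_congr (hcond l) rfl rfl]),
          Finset.sum_ite_eq' Finset.univ k' (fun l => C j l * X l)]
        simp
      rw [hs2]
      have hk'k : (k' : ℕ) = (k : ℕ) - 1 := rfl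
      by_cases hjk : j = k
      · have hnk : ¬ j ≤ k' := by
          rw [Fin.le_def]; omega
        rw [if_pos hjk, hjk, hC k k', if_neg (by rw [hjk] at hnk; exact hnk), zero_mul, add_zero]
        rw [hC, if_pos le_rfl, hX, Nat.sub_self, pow_zero, one_mul, ← zpow_add₀ hA]
        rw [show (p * (((k : ℤ) + 1) ^ 2 - 1) + p * (((k : ℤ) + 1) - ((k : ℤ) + 1) ^ 2)) +
          (p * (1 - ((k : ℤ) + 1) ^ 2) + p * (((k : ℤ) + 1) ^ 2 - ((k : ℤ) + 1))) = 0 by ring]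
        exact zpow_zero A
      · rw [if_neg hjk]
        by_cases hle : j ≤ k
        · have hjlt : (j : ℕ) < (k : ℕ) := by
            rcases lt_or_eq_of_le (Fin.le_def.mp hle) with h | h
            · exact h
            · exact absurd (Fin.ext h) hjk
          have hle' : j ≤ k' := by rw [Fin.le_def]; omega
          rw [hC j k, if_pos hle, hC j k', if_pos hle', hX]
          have hkz : ((k' : ℤ) : ℤ) = (k : ℤ) - 1 := by
            have : ((k' : ℕ) : ℤ) = ((k : ℕ) : ℤ) - 1 := by omega
            exact this
          have hsign : ((-1 : ℂ)) ^ ((k : ℕ) - (j : ℕ)) =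
              -(-1 : ℂ) ^ ((k' : ℕ) - (j : ℕ)) := by
            have h1 : (k : ℕ) - (j : ℕ) = ((k' : ℕ) - (j : ℕ)) + 1 := by omega
            rw [h1, pow_succ]
            ring
          rw [hsign]
          rw [mul_assoc, mul_assoc, ← zpow_add₀ hA, ← zpow_add₀ hA]
          rw [show p * (((k : ℤ) + 1) ^ 2 - 1) + p * (((j : ℤ) + 1) - ((j : ℤ) + 1) ^ 2) +
            (p * (1 - ((k : ℤ) + 1) ^ 2) + p * (((k : ℤ) + 1) ^ 2 - ((k : ℤ) + 1)))
            = p * (((j : ℤ) + 1) - ((j : ℤ) + 1) ^ 2) + p * (((k : ℤ) + 1) ^ 2 - ((k : ℤ) + 1))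
            by ring]
          rw [show p * (((k' : ℤ) + 1) ^ 2 - 1) + p * (((j : ℤ) + 1) - ((j : ℤ) + 1) ^ 2) +
            (p * (1 - ((k' : ℤ) + 1) ^ 2) + p * (((k : ℤ) + 1) ^ 2 - ((k : ℤ) + 1)))
            = p * (((j : ℤ) + 1) - ((j : ℤ) + 1) ^ 2) + p * (((k : ℤ) + 1) ^ 2 - ((k : ℤ) + 1))
            by ring]
          ring
        · have hle' : ¬ j ≤ k' := by
            rw [Fin.le_def] at hle ⊢; omega
          rw [hC j k, if_neg hle, hC j k', if_neg hle', zero_mul, zero_mul, add_zero]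
      done
  exact ⟨(Matrix.isUnit_iff_isUnit_det C).mpr (Matrix.isUnit_det_of_right_inverse hmul), Matrix.inv_eq_right_inv hmul⟩
end

section
/- Let $m \geq 1$, let $p$ be an integer, and let $A$ be a complex number with $|A| = 1$. Let $C$ be the $m \times m$ complex matrix with entries $C_{jk} = (-1)^{k-j} A^{p(k^2-1) + p(j - j^2)}$ if $j \leq k$ and $C_{jk} = 0$ otherwise (indices $1 \leq j, k \leq m$; $A^n$ for $n \in \mathbb{Z}$ denotes integer powers of the nonzero number $A$). Then for every vector $x \in \mathbb{C}^m$, $\|x\|_2 \leq 2 \, \|C x\|_2$, where $\|\cdot\|_2$ denotes the Euclidean (Hermitian $\ell^2$) norm on $\mathbb{C}^m$. -/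
theorem cabling_matrix_lower_bound
    (m : ℕ) (hm : 1 ≤ m) (p : ℤ) (A : ℂ) (hA : ‖A‖ = 1)
    (C : Matrix (Fin m) (Fin m) ℂ)
    (hC : ∀ j k : Fin m, C j k =
      if j ≤ k then
        (-1 : ℂ) ^ ((k : ℕ) - (j : ℕ)) *
          A ^ (p * (((k : ℤ) + 1) ^ 2 - 1) + p * (((j : ℤ) + 1) - ((j : ℤ) + 1) ^ 2))
      else 0) :
    ∀ x : EuclideanSpace ℂ (Fin m), ‖x‖ ≤ 2 * ‖Matrix.toEuclideanLin C x‖ := by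
  intro x
  have hA0 : A ≠ 0 := by
    intro h; rw [h] at hA; simp at hA
  set y : Fin m → ℂ := C.mulVec (fun k => x k) with hy
  have habsz : ∀ z : ℤ, ‖A ^ z‖ = 1 := by
    intro z; rw [norm_zpow, hA, one_zpow]
  -- |C j j| = 1 machinery
  have hCdiag : ∀ j : Fin m, ‖C j j‖ = 1 := by
    intro j
    rw [hC j j, if_pos le_rfl, Nat.sub_self, pow_zero, one_mul, habsz]
  set f : ℕ → ℝ := fun n => if h : n < m then ‖y ⟨n, h⟩‖ else 0 with hf
  have hfnn : ∀ n, 0 ≤ f n := by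
    intro n; rw [hf]; dsimp only; split <;> positivity
  have key : ∀ j : Fin m, ‖x j‖ ≤ f (j : ℕ) + f ((j : ℕ) + 1) := by
    intro j
    by_cases hj : (j : ℕ) + 1 < m
    · set j' : Fin m := ⟨(j : ℕ) + 1, hj⟩ with hj'
      set u : ℂ := A ^ (p * (((j : ℤ) + 1) - ((j : ℤ) + 1) ^ 2)
          - p * (((j : ℤ) + 2) - ((j : ℤ) + 2) ^ 2)) with hu
      have hentry : ∀ k : Fin m, C j k + u * C j' k =
          if k = j then C j j else 0 := by
        intro k
        have hj'v : (j' : ℕ) = (j : ℕ) + 1 := rfl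
        rcases lt_trichotomy (k : ℕ) (j : ℕ) with hlt | heq | hgt
        · have hk1 : ¬ j ≤ k := fun h => absurd (Fin.le_def.mp h) (by omega)
          have hk2 : ¬ j' ≤ k := fun h => absurd (Fin.le_def.mp h) (by rw [hj'v]; omega)
          have hk3 : k ≠ j := Fin.ne_of_lt (Fin.lt_def.mpr hlt)
          rw [hC j k, hC j' k, if_neg hk1, if_neg hk2, if_neg hk3]; ring
        · have : k = j := Fin.ext heq
          subst this
          have hk2 : ¬ j' ≤ k := fun h => absurd (Fin.le_def.mp h) (by rw [hj'v]; omega)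
          rw [hC j' k, if_neg hk2, if_pos rfl]
          ring
        · have h1 : j ≤ k := Fin.le_def.mpr (le_of_lt hgt)
          have h2 : j' ≤ k := Fin.le_def.mpr (by rw [hj'v]; omega)
          rw [hC j k, hC j' k, if_pos h1, if_pos h2, if_neg (Fin.ne_of_gt (Fin.lt_def.mpr hgt))]
          obtain ⟨n, hn⟩ : ∃ n, (k : ℕ) - (j : ℕ) = n + 1 := ⟨(k:ℕ) - (j:ℕ) - 1, by omega⟩
          have hn' : (k : ℕ) - ((j' : ℕ)) = n := by rw [hj'v]; omega
          have hjz : ((j' : ℤ)) = (j : ℤ) + 1 := by rw [hj'v]; push_cast; ring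
          rw [hn, hn', hjz, hu, mul_comm (A ^ _ : ℂ), mul_assoc, ← zpow_add₀ hA0]
          rw [show (p * (((k : ℤ) + 1) ^ 2 - 1) + p * ((((j:ℤ)+1) + 1) - (((j:ℤ)+1) + 1) ^ 2))
              + (p * (((j : ℤ) + 1) - ((j : ℤ) + 1) ^ 2)
                - p * (((j : ℤ) + 2) - ((j : ℤ) + 2) ^ 2))
              = p * (((k : ℤ) + 1) ^ 2 - 1) + p * (((j : ℤ) + 1) - ((j : ℤ) + 1) ^ 2) by ring]
          rw [pow_succ]
          ring
      have hyj : y j + u * y j' = C j j * x j := by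
        rw [hy]
        simp only [Matrix.mulVec, dotProduct]
        rw [Finset.mul_sum, ← Finset.sum_add_distrib]
        have : ∀ k : Fin m, C j k * x k + u * (C j' k * x k)
            = (if k = j then C j j * x k else 0) := by
          intro k
          rw [show C j k * x k + u * (C j' k * x k) = (C j k + u * C j' k) * x k by ring,
            hentry k]
          split <;> simp
        rw [Finset.sum_congr rfl (fun k _ => this k), Finset.sum_ite_eq' Finset.univ j]
        simp
      have habs : ‖x j‖ ≤ ‖y j‖ + ‖y j'‖ := by
        have h1 : ‖C j j * x j‖ = ‖x j‖ := by
          rw [norm_mul, hCdiag, one_mul]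
        calc ‖x j‖ = ‖y j + u * y j'‖ := by rw [hyj, h1]
          _ ≤ ‖y j‖ + ‖u * y j'‖ := norm_add_le _ _
          _ = ‖y j‖ + ‖y j'‖ := by
              rw [norm_mul, hu, habsz, one_mul]
      have e1 : f (j : ℕ) = ‖y j‖ := by
        rw [hf]; dsimp only; rw [dif_pos j.isLt]
      have e2 : f ((j : ℕ) + 1) = ‖y j'‖ := by
        rw [hf]; dsimp only; rw [dif_pos hj]
      rw [e1, e2]; exact habs
    · -- last row
      have hjm : ∀ k : Fin m, k ≠ j → C j k * x k = 0 := by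
        intro k hk
        rw [hC j k, if_neg, zero_mul]
        intro h
        exact hk (Fin.ext (by have := Fin.le_def.mp h; omega))
      have hyj : y j = C j j * x j := by
        rw [hy]
        simp only [Matrix.mulVec, dotProduct]
        exact Finset.sum_eq_single j (fun k _ hk => hjm k hk) (by simp)
      have e1 : f (j : ℕ) = ‖y j‖ := by
        rw [hf]; dsimp only; rw [dif_pos j.isLt]
      have e2 : f ((j : ℕ) + 1) = 0 := by rw [hf]; dsimp only; rw [dif_neg hj]
      rw [e1, e2, add_zero, hyj, norm_mul, hCdiag, one_mul]
  -- now the norm estimate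
  have hYfun : ∀ i : Fin m, (Matrix.toEuclideanLin C x) i = y i := fun i => rfl
  set S : ℝ := ∑ n ∈ Finset.range m, (f n) ^ 2 with hS
  have hSnn : 0 ≤ S := Finset.sum_nonneg fun n _ => sq_nonneg _
  have hY : ‖Matrix.toEuclideanLin C x‖ = Real.sqrt S := by
    rw [EuclideanSpace.norm_eq]
    congr 1
    rw [hS, ← Fin.sum_univ_eq_sum_range (fun n => (f n)^2)]
    refine Finset.sum_congr rfl fun i _ => ?_
    rw [hYfun i, hf]
    dsimp only
    rw [dif_pos i.isLt, Fin.eta]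
  have hshift : ∑ n ∈ Finset.range m, (f (n + 1)) ^ 2 ≤ S := by
    have h1 : ∑ n ∈ Finset.range (m + 1), (f n) ^ 2
        = (∑ n ∈ Finset.range m, (f (n + 1)) ^ 2) + (f 0) ^ 2 :=
      Finset.sum_range_succ' _ _
    have h2 : ∑ n ∈ Finset.range (m + 1), (f n) ^ 2 = S + (f m) ^ 2 :=
      Finset.sum_range_succ _ _
    have h3 : f m = 0 := by rw [hf]; dsimp only; rw [dif_neg (lt_irrefl m)]
    have h4 : (0:ℝ) ≤ (f 0) ^ 2 := sq_nonneg _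
    rw [h3] at h2
    nlinarith [sq_nonneg (f 0)]
  have hsum : ∑ i : Fin m, ‖x i‖ ^ 2 ≤ 4 * S := by
    have step : ∀ j : Fin m, ‖x j‖ ^ 2 ≤ 2 * (f (j:ℕ))^2 + 2 * (f ((j:ℕ)+1))^2 := by
      intro j
      have h := key j
      have h0 : (0:ℝ) ≤ ‖x j‖ := norm_nonneg _
      have := hfnn (j : ℕ); have := hfnn ((j:ℕ)+1)
      nlinarith [sq_nonneg (f (j:ℕ) - f ((j:ℕ)+1))]
    calc ∑ i : Fin m, ‖x i‖ ^ 2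
        ≤ ∑ i : Fin m, (2 * (f (i:ℕ))^2 + 2 * (f ((i:ℕ)+1))^2) :=
          Finset.sum_le_sum fun i _ => step i
      _ = 2 * (∑ n ∈ Finset.range m, (f n)^2)
          + 2 * (∑ n ∈ Finset.range m, (f (n+1))^2) := by
          rw [Finset.sum_add_distrib,
            Fin.sum_univ_eq_sum_range (fun n => 2 * (f n)^2),
            Fin.sum_univ_eq_sum_range (fun n => 2 * (f (n+1))^2),
            Finset.mul_sum, Finset.mul_sum]
      _ ≤ 4 * S := by rw [← hS]; nlinarith
  rw [EuclideanSpace.norm_eq, hY]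
  calc Real.sqrt (∑ i : Fin m, ‖x i‖ ^ 2) ≤ Real.sqrt (4 * S) := Real.sqrt_le_sqrt hsum
    _ = 2 * Real.sqrt S := by
        rw [show (4:ℝ) * S = (2 * Real.sqrt S)^2 by
          rw [mul_pow, Real.sq_sqrt hSnn]; ring]
        exact Real.sqrt_sq (by positivity)
end
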